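/- Let M > 0 be real, ω a positive integer, r > 0 real, and θ real with πω/2 < |θ| < πω. Then |∫_0^∞ e^{-t} t^{M-1} / (1 + (t/r)^{1/ω} e^{-iθ/ω}) dt| ≤ Γ(M) · |csc(θ/ω)|. -/

import Mathlib

open MeasureTheory Real Complex

lemma hyperterminant_denom_norm_ge (φ x : ℝ) :
    |Real.sin φ| ≤ ‖(1 : ℂ) + (x : ℂ) * Complex.exp ((-φ : ℝ) * Complex.I)‖ := by
  have he : Complex.exp (-((φ : ℂ) * Complex.I))
      = ((Real.cos φ : ℝ) : ℂ) - ((Real.sin φ : ℝ) : ℂ) * Complex.I := by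
    rw [← neg_mul, Complex.exp_mul_I]
    rw [Complex.cos_neg, Complex.sin_neg, ← Complex.ofReal_cos, ← Complex.ofReal_sin]
    ring
  set z : ℂ := (1 : ℂ) + (x : ℂ) * Complex.exp ((-φ : ℝ) * Complex.I) with hz
  have hre : z.re = 1 + x * Real.cos φ := by simp [hz, he, Complex.cos_ofReal_re, Complex.sin_ofReal_re]
  have him : z.im = -(x * Real.sin φ) := by simp [hz, he, Complex.cos_ofReal_re, Complex.sin_ofReal_re]
  have h1 : Real.sin φ ^ 2 ≤ Complex.normSq z := by
    rw [Complex.normSq_apply, hre, him]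
    nlinarith [sq_nonneg (x + Real.cos φ), Real.sin_sq_add_cos_sq φ]
  calc |Real.sin φ| = Real.sqrt (Real.sin φ ^ 2) := (Real.sqrt_sq_eq_abs _).symm
    _ ≤ Real.sqrt (Complex.normSq z) := Real.sqrt_le_sqrt h1
    _ = ‖z‖ := by rw [Complex.norm_def]

/-- Second case of the bound for the generalised first-level hyperterminant:
for `M > 0`, `ω` a positive integer, `r > 0` and `πω/2 < |θ| < πω`, the modulus of
`∫_0^∞ e^{-t} t^{M-1} / (1 + (t/r)^{1/ω} e^{-iθ/ω}) dt` is at most `Γ(M)·|csc(θ/ω)|`. -/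
theorem hyperterminant_bound_case2_csc
    (M : ℝ) (hM : 0 < M) (ω : ℕ) (hω : 0 < ω) (r : ℝ) (hr : 0 < r)
    (θ : ℝ) (hθ₁ : π * ω / 2 < |θ|) (hθ₂ : |θ| < π * ω) :
    ‖∫ t in Set.Ioi (0 : ℝ),
        ((Real.exp (-t) * t ^ (M - 1) : ℝ) : ℂ) /
          (1 + (((t / r) ^ (1 / (ω : ℝ)) : ℝ) : ℂ) *
            Complex.exp (-(θ / (ω : ℝ)) * Complex.I))‖
      ≤ Real.Gamma M * |1 / Real.sin (θ / (ω : ℝ))| := by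
  set φ := θ / (ω : ℝ) with hφ
  have hωR : (0 : ℝ) < (ω : ℝ) := by exact_mod_cast hω
  have habs : |φ| = |θ| / (ω : ℝ) := by
    rw [hφ, abs_div, abs_of_pos hωR]
  have h0 : 0 < |φ| := by
    rw [habs]
    have : 0 < |θ| := lt_trans (by positivity) hθ₁
    positivity
  have hlt : |φ| < π := by
    rw [habs, div_lt_iff₀ hωR]
    linarith
  have hsinpos : 0 < Real.sin |φ| := Real.sin_pos_of_pos_of_lt_pi h0 hlt
  have hsin : Real.sin φ ≠ 0 := by
    rcases abs_cases φ with ⟨h, _⟩ | ⟨h, _⟩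
    · rw [h] at hsinpos; exact ne_of_gt hsinpos
    · rw [h, Real.sin_neg] at hsinpos
      intro hc; rw [hc] at hsinpos; simp at hsinpos
  have hsinabs : 0 < |Real.sin φ| := abs_pos.mpr hsin
  have hGint : IntegrableOn (fun t : ℝ => Real.exp (-t) * t ^ (M - 1)) (Set.Ioi 0) :=
    Real.GammaIntegral_convergent hM
  have hgint : Integrable
      (fun t : ℝ => Real.exp (-t) * t ^ (M - 1) * |1 / Real.sin φ|)
      (volume.restrict (Set.Ioi (0:ℝ))) := hGint.mul_const _
  have hbound : ∀ᵐ t ∂(volume.restrict (Set.Ioi (0:ℝ))),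
      ‖((Real.exp (-t) * t ^ (M - 1) : ℝ) : ℂ) /
          (1 + (((t / r) ^ (1 / (ω : ℝ)) : ℝ) : ℂ) *
            Complex.exp (-(θ / (ω : ℝ)) * Complex.I))‖
        ≤ Real.exp (-t) * t ^ (M - 1) * |1 / Real.sin φ| := by
    filter_upwards [ae_restrict_mem measurableSet_Ioi] with t ht
    have ht0 : 0 < t := ht
    have hnum : ‖((Real.exp (-t) * t ^ (M - 1) : ℝ) : ℂ)‖
        = Real.exp (-t) * t ^ (M - 1) := by
      rw [Complex.norm_real]
      exact Real.norm_of_nonneg (by positivity)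
    have hden : |Real.sin φ| ≤
        ‖(1 : ℂ) + (((t / r) ^ (1 / (ω : ℝ)) : ℝ) : ℂ) *
          Complex.exp (-(θ / (ω : ℝ)) * Complex.I)‖ := by
      have := hyperterminant_denom_norm_ge φ ((t / r) ^ (1 / (ω : ℝ)))
      convert this using 4
      push_cast [hφ]
      ring_nf
    rw [norm_div, hnum]
    have hnumnn : 0 ≤ Real.exp (-t) * t ^ (M - 1) := by positivity
    calc Real.exp (-t) * t ^ (M - 1) /
          ‖(1 : ℂ) + (((t / r) ^ (1 / (ω : ℝ)) : ℝ) : ℂ) *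
            Complex.exp (-(θ / (ω : ℝ)) * Complex.I)‖
        ≤ Real.exp (-t) * t ^ (M - 1) / |Real.sin φ| := by
          gcongr
      _ = Real.exp (-t) * t ^ (M - 1) * |1 / Real.sin φ| := by
          rw [abs_div, abs_one, div_eq_mul_inv, one_div]
  calc ‖∫ t in Set.Ioi (0 : ℝ),
        ((Real.exp (-t) * t ^ (M - 1) : ℝ) : ℂ) /
          (1 + (((t / r) ^ (1 / (ω : ℝ)) : ℝ) : ℂ) *
            Complex.exp (-(θ / (ω : ℝ)) * Complex.I))‖
      ≤ ∫ t in Set.Ioi (0 : ℝ), Real.exp (-t) * t ^ (M - 1) * |1 / Real.sin φ| :=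
        norm_integral_le_of_norm_le hgint hbound
    _ = (∫ t in Set.Ioi (0 : ℝ), Real.exp (-t) * t ^ (M - 1)) * |1 / Real.sin φ| :=
        integral_mul_const _ _
    _ = Real.Gamma M * |1 / Real.sin φ| := by
        rw [Real.Gamma_eq_integral hM]
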